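/- Lovász's formula for graphs: for finite simple graphs G and H, the number of graph homomorphisms satisfies hom(G,H) = ∑_A (quo(G,A)/aut(A)) · mon(A,H), where the sum ranges over a system of representatives A of isomorphism classes of graphs, quo(G,A) is the number of quotient maps (homomorphisms surjective on vertices and edges) from G to A, mon(A,H) is the number of injective homomorphisms from A to H, and aut(A) is the number of automorphisms of A. -/

import Mathlib

open Function

/-- The number of graph homomorphisms from G to H. -/
noncomputable def homCount {V W : Type*} (G : SimpleGraph V) (H : SimpleGraph W) : ℕ :=
  Nat.card (G →g H)

/-- The number of injective graph homomorphisms (monomorphisms) from G to H. -/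
noncomputable def monCount {V W : Type*} (G : SimpleGraph V) (H : SimpleGraph W) : ℕ :=
  Nat.card {f : G →g H // Function.Injective f}

/-- The number of quotient maps from G to H: homomorphisms surjective on both
vertices and edges. -/
noncomputable def quoCount {V W : Type*} (G : SimpleGraph V) (H : SimpleGraph W) : ℕ :=
  Nat.card {f : G →g H // Function.Surjective f ∧
    ∀ a b : W, H.Adj a b → ∃ x y : V, G.Adj x y ∧ f x = a ∧ f y = b}

/-- The number of automorphisms of G. -/
noncomputable def autCount {V : Type*} (G : SimpleGraph V) : ℕ :=
  Nat.card (G ≃g G)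

/-- `f` is a quotient map: surjective on vertices and edges. -/
def IsQuo {V W : Type*} {G : SimpleGraph V} {H : SimpleGraph W} (f : G →g H) : Prop :=
  Function.Surjective f ∧ ∀ a b : W, H.Adj a b → ∃ x y : V, G.Adj x y ∧ f x = a ∧ f y = b

/-- `f` factors as a quotient onto `A` followed by a mono into `H`. -/
def Cond {VG VA VH : Type*} (G : SimpleGraph VG) (A : SimpleGraph VA) (H : SimpleGraph VH)
    (f : G →g H) : Prop :=
  ∃ (q : G →g A) (m : A →g H), IsQuo q ∧ Injective m ∧ m.comp q = f

instance homFinite {V W : Type*} [Finite V] [Finite W] {G : SimpleGraph V}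
    {H : SimpleGraph W} : Finite (G →g H) :=
  Finite.of_injective (fun f => (f : V → W)) DFunLike.coe_injective

instance isoFinite {V : Type*} [Finite V] {G : SimpleGraph V} : Finite (G ≃g G) :=
  Finite.of_injective (fun f => (f : V → V)) DFunLike.coe_injective

lemma factorIso {VG VA VB VH : Type*} {G : SimpleGraph VG} {A : SimpleGraph VA}
    {B : SimpleGraph VB} {H : SimpleGraph VH}
    (q : G →g A) (m : A →g H) (q' : G →g B) (m' : B →g H)
    (hq : IsQuo q) (hq' : IsQuo q') (hm : Injective m) (hm' : Injective m')
    (hf : ∀ x, m (q x) = m' (q' x)) :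
    ∃ σ : A ≃g B, (∀ x, σ (q x) = q' x) ∧ (∀ a, m' (σ a) = m a) := by
  have key1 : ∀ x y, q x = q y → q' x = q' y := fun x y h => hm' (by rw [← hf, ← hf, h])
  have key2 : ∀ x y, q' x = q' y → q x = q y := fun x y h => hm (by rw [hf, hf, h])
  have hsec : ∀ a, q (surjInv hq.1 a) = a := fun a => surjInv_eq hq.1 a
  have hsec' : ∀ b, q' (surjInv hq'.1 b) = b := fun b => surjInv_eq hq'.1 b
  let toF : VA → VB := fun a => q' (surjInv hq.1 a)
  let invF : VB → VA := fun b => q (surjInv hq'.1 b)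
  have hσq : ∀ x, toF (q x) = q' x := fun x => key1 _ _ (hsec (q x))
  have hτq : ∀ x, invF (q' x) = q x := fun x => key2 _ _ (hsec' (q' x))
  have left_inv : LeftInverse invF toF := by
    intro a; obtain ⟨x, rfl⟩ := hq.1 a; rw [hσq, hτq]
  have right_inv : RightInverse invF toF := by
    intro b; obtain ⟨x, rfl⟩ := hq'.1 b; rw [hτq, hσq]
  let eqv : VA ≃ VB := ⟨toF, invF, left_inv, right_inv⟩
  have hrel : ∀ {a b : VA}, B.Adj (eqv a) (eqv b) ↔ A.Adj a b := by
    intro a b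
    constructor
    · intro h
      obtain ⟨x, y, hxy, hx, hy⟩ := hq'.2 _ _ h
      have hxa : q x = a := eqv.injective (by show toF (q x) = eqv a; rw [hσq, hx])
      have hyb : q y = b := eqv.injective (by show toF (q y) = eqv b; rw [hσq, hy])
      rw [← hxa, ← hyb]; exact q.map_adj hxy
    · intro h
      obtain ⟨x, y, hxy, rfl, rfl⟩ := hq.2 _ _ h
      show B.Adj (toF (q x)) (toF (q y))
      rw [hσq, hσq]; exact q'.map_adj hxy
  refine ⟨⟨eqv, hrel⟩, fun x => hσq x, fun a => ?_⟩
  obtain ⟨x, rfl⟩ := hq.1 a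
  show m' (toF (q x)) = m (q x)
  rw [hσq]; exact (hf x).symm

lemma transport {VG VA VB VH : Type*} {G : SimpleGraph VG} {A : SimpleGraph VA}
    {B : SimpleGraph VB} {H : SimpleGraph VH}
    (q : G →g A) (m : A →g H) (hq : IsQuo q) (hm : Injective m) (ψ : A ≃g B) :
    IsQuo (ψ.toHom.comp q) ∧ Injective (m.comp ψ.symm.toHom) ∧
      ∀ x, (m.comp ψ.symm.toHom) ((ψ.toHom.comp q) x) = m (q x) := by
  refine ⟨⟨?_, ?_⟩, ?_, ?_⟩
  · exact ψ.toEquiv.surjective.comp hq.1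
  · intro a b hab
    have : A.Adj (ψ.symm a) (ψ.symm b) := ψ.symm.map_adj_iff.mpr hab
    obtain ⟨x, y, hxy, hx, hy⟩ := hq.2 _ _ this
    refine ⟨x, y, hxy, ?_, ?_⟩
    · show ψ (q x) = a; rw [hx]; exact ψ.apply_symm_apply a
    · show ψ (q y) = b; rw [hy]; exact ψ.apply_symm_apply b
  · intro a b hab
    exact ψ.symm.toEquiv.injective (hm hab)
  · intro x
    show m (ψ.symm (ψ (q x))) = m (q x)
    rw [ψ.symm_apply_apply]

lemma key {VG VA VH : Type*} [Finite VG] [Finite VA] [Finite VH]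
    (G : SimpleGraph VG) (A : SimpleGraph VA) (H : SimpleGraph VH) :
    quoCount G A * monCount A H =
      autCount A * Nat.card {f : G →g H // Cond G A H f} := by
  classical
  haveI : Fintype (G →g H) := Fintype.ofFinite _
  haveI : Fintype {q : G →g A // IsQuo q} := Fintype.ofFinite _
  haveI : Fintype {m : A →g H // Injective (⇑m)} := Fintype.ofFinite _
  let Φ : {q : G →g A // IsQuo q} × {m : A →g H // Injective (⇑m)} → (G →g H) :=
    fun p => p.2.1.comp p.1.1
  have hfiber : ∀ f : G →g H, Nat.card {p // Φ p = f} =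
      if Cond G A H f then autCount A else 0 := by
    intro f
    by_cases hC : Cond G A H f
    · rw [if_pos hC]
      obtain ⟨q₀, m₀, hq₀, hm₀, hfac⟩ := hC
      let Ψ : (A ≃g A) → {p // Φ p = f} := fun σ =>
        ⟨(⟨σ.toHom.comp q₀, (transport q₀ m₀ hq₀ hm₀ σ).1⟩,
          ⟨m₀.comp σ.symm.toHom, (transport q₀ m₀ hq₀ hm₀ σ).2.1⟩), by
            ext x
            show (m₀.comp σ.symm.toHom) ((σ.toHom.comp q₀) x) = f x
            rw [(transport q₀ m₀ hq₀ hm₀ σ).2.2 x, ← hfac]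
            rfl⟩
      have hbij : Bijective Ψ := by
        constructor
        · intro σ₁ σ₂ h
          have h1 : σ₁.toHom.comp q₀ = σ₂.toHom.comp q₀ :=
            congrArg (fun p => p.val.1.val) h
          ext a
          obtain ⟨x, rfl⟩ := hq₀.1 a
          exact DFunLike.congr_fun h1 x
        · rintro ⟨⟨⟨q', hq'⟩, ⟨m', hm'⟩⟩, hΦ⟩
          have hf' : ∀ x, m₀ (q₀ x) = m' (q' x) := fun x => by
            rw [show m₀ (q₀ x) = f x from DFunLike.congr_fun hfac x,
              ← show (m'.comp q') x = f x from DFunLike.congr_fun hΦ x]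
            rfl
          obtain ⟨σ, hσ1, hσ2⟩ := factorIso q₀ m₀ q' m' hq₀ hq' hm₀ hm' hf'
          refine ⟨σ, Subtype.ext (Prod.ext (Subtype.ext ?_) (Subtype.ext ?_))⟩
          · ext x; exact hσ1 x
          · ext b
            obtain ⟨a, rfl⟩ := σ.toEquiv.surjective b
            show m₀ (σ.symm (σ a)) = m' (σ a)
            rw [σ.symm_apply_apply]
            exact (hσ2 a).symm
      rw [← Nat.card_eq_of_bijective Ψ hbij]
      rfl
    · rw [if_neg hC]
      rw [Nat.card_eq_zero]
      left
      refine ⟨?_⟩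
      rintro ⟨⟨⟨q, hq⟩, ⟨m, hm⟩⟩, hΦ⟩
      exact hC ⟨q, m, hq, hm, hΦ⟩
  calc quoCount G A * monCount A H
      = Nat.card ({q : G →g A // IsQuo q} × {m : A →g H // Injective (⇑m)}) := by
        rw [Nat.card_prod]; rfl
    _ = ∑ f : G →g H, Nat.card {p // Φ p = f} := by
        rw [Nat.card_eq_fintype_card,
          ← Fintype.card_congr (Equiv.sigmaFiberEquiv Φ), Fintype.card_sigma]
        simp [Nat.card_eq_fintype_card]
    _ = ∑ f : G →g H, if Cond G A H f then autCount A else 0 :=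
        Finset.sum_congr rfl fun f _ => hfiber f
    _ = autCount A * Nat.card {f : G →g H // Cond G A H f} := by
        rw [Finset.sum_ite, Finset.sum_const, Finset.sum_const_zero, add_zero,
          smul_eq_mul, Nat.card_eq_fintype_card, Fintype.card_subtype, mul_comm]

lemma exists_rep {VG VH : Type} [Fintype VG] [Fintype VH] (G : SimpleGraph VG)
    (H : SimpleGraph VH) (f : G →g H) :
    ∃ (k : ℕ), k ≤ Fintype.card VG ∧ ∃ (A : SimpleGraph (Fin k)), Cond G A H f := by
  classical
  haveI : Fintype (Set.range (⇑f)) := Set.fintypeRange _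
  refine ⟨Fintype.card (Set.range (⇑f)), Fintype.card_range_le _, ?_⟩
  set k := Fintype.card (Set.range (⇑f)) with hkdef
  let e : Set.range (⇑f) ≃ Fin k := Fintype.equivFin _
  let A : SimpleGraph (Fin k) :=
    { Adj := fun i j => ∃ x y, G.Adj x y ∧ f x = (e.symm i : VH) ∧ f y = (e.symm j : VH)
      symm := ⟨by rintro i j ⟨x, y, h, hx, hy⟩; exact ⟨y, x, h.symm, hy, hx⟩⟩
      loopless := ⟨by
        rintro i ⟨x, y, h, hx, hy⟩
        have hadj := f.map_adj h
        rw [hx, hy] at hadj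
        exact H.loopless.irrefl _ hadj⟩ }
  have hqe : ∀ x (i : Fin k), f x = (e.symm i : VH) → e ⟨f x, Set.mem_range_self x⟩ = i := by
    intro x i hx
    have : (⟨f x, Set.mem_range_self x⟩ : Set.range (⇑f)) = e.symm i := Subtype.ext hx
    rw [this, e.apply_symm_apply]
  let q : G →g A := ⟨fun x => e ⟨f x, Set.mem_range_self x⟩, by
    intro a b h
    refine ⟨a, b, h, ?_, ?_⟩ <;> simp [Equiv.symm_apply_apply]⟩
  let m : A →g H := ⟨fun i => (e.symm i : VH), by
    rintro i j ⟨x, y, h, hx, hy⟩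
    show H.Adj (e.symm i : VH) (e.symm j : VH)
    rw [← hx, ← hy]
    exact f.map_adj h⟩
  refine ⟨A, q, m, ⟨?_, ?_⟩, ?_, ?_⟩
  · intro i
    obtain ⟨x, hx⟩ := (e.symm i).2
    exact ⟨x, hqe x i hx⟩
  · rintro i j ⟨x, y, h, hx, hy⟩
    exact ⟨x, y, h, hqe x i hx, hqe y j hy⟩
  · intro i j hij
    exact e.symm.injective (Subtype.ext hij)
  · ext x
    show (e.symm (e ⟨f x, Set.mem_range_self x⟩) : VH) = f x
    rw [e.symm_apply_apply]

/-- Lovász's formula: hom(G,H) = ∑_A quo(G,A)/aut(A) · mon(A,H), where A ranges over a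
system of representatives of isomorphism classes of graphs (on at most |V(G)| vertices,
the only ones contributing a nonzero term). -/
theorem lovasz_formula {VG VH : Type} [Fintype VG] [Fintype VH]
    (G : SimpleGraph VG) (H : SimpleGraph VH)
    (S : Finset (Σ k : Fin (Fintype.card VG + 1), SimpleGraph (Fin k)))
    (hS : ∀ (k : Fin (Fintype.card VG + 1)) (A : SimpleGraph (Fin k)),
      ∃! s, s ∈ S ∧ Nonempty (A ≃g s.2)) :
    (homCount G H : ℚ) =
      ∑ s ∈ S, (quoCount G s.2 : ℚ) / (autCount s.2) * (monCount s.2 H) := by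
  classical
  haveI : Fintype (G →g H) := Fintype.ofFinite _
  have huniq : ∀ f : G →g H, ∃! s, s ∈ S ∧ Cond G s.2 H f := by
    intro f
    obtain ⟨k, hk, A, q, m, hq, hm, hcomp⟩ := exists_rep G H f
    obtain ⟨s, ⟨hsS, ⟨ψ⟩⟩, -⟩ := hS ⟨k, Nat.lt_succ_of_le hk⟩ A
    have hcs : Cond G s.2 H f := by
      obtain ⟨h1, h2, h3⟩ := transport q m hq hm ψ
      refine ⟨ψ.toHom.comp q, m.comp ψ.symm.toHom, h1, h2, ?_⟩
      ext x
      rw [show ((m.comp ψ.symm.toHom).comp (ψ.toHom.comp q)) x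
          = (m.comp ψ.symm.toHom) ((ψ.toHom.comp q) x) from rfl, h3 x, ← hcomp]
      rfl
    refine ⟨s, ⟨hsS, hcs⟩, ?_⟩
    rintro s' ⟨hs'S, q', m', hq', hm', hc'⟩
    obtain ⟨qs, ms, hqs, hms, hcs'⟩ := hcs
    have hf' : ∀ x, ms (qs x) = m' (q' x) := fun x => by
      rw [show ms (qs x) = (ms.comp qs) x from rfl, hcs',
        show m' (q' x) = (m'.comp q') x from rfl, hc']
    obtain ⟨σ, -, -⟩ := factorIso qs ms q' m' hqs hq' hms hm' hf'
    obtain ⟨t, -, ht⟩ := hS s.1 s.2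
    exact (ht s' ⟨hs'S, ⟨σ⟩⟩).trans (ht s ⟨hsS, ⟨RelIso.refl _⟩⟩).symm
  have hr : ∀ f : G →g H, ∃ s, s ∈ S ∧ Cond G s.2 H f := fun f => (huniq f).exists
  have hcard : homCount G H = ∑ s ∈ S, Nat.card {f : G →g H // Cond G s.2 H f} := by
    rw [homCount, Nat.card_eq_fintype_card, ← Finset.card_univ,
      Finset.card_eq_sum_card_fiberwise (f := fun f => (hr f).choose)
        (fun f _ => ((hr f).choose_spec).1)]
    refine Finset.sum_congr rfl fun s hs => ?_
    rw [Nat.card_eq_fintype_card, Fintype.card_subtype]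
    congr 1
    ext f
    simp only [Finset.mem_filter, Finset.mem_univ, true_and]
    constructor
    · rintro rfl; exact ((hr f).choose_spec).2
    · intro h; exact (huniq f).unique (hr f).choose_spec ⟨hs, h⟩
  have main : ∀ s ∈ S, (quoCount G s.2 : ℚ) / (autCount s.2) * (monCount s.2 H)
      = (Nat.card {f : G →g H // Cond G s.2 H f} : ℚ) := by
    intro s hs
    haveI : Nonempty (s.2 ≃g s.2) := ⟨RelIso.refl _⟩
    have haut : (0 : ℚ) < autCount s.2 := by
      exact_mod_cast Nat.card_pos (α := s.2 ≃g s.2)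
    rw [div_mul_eq_mul_div,
      show (quoCount G s.2 : ℚ) * (monCount s.2 H)
        = (autCount s.2 : ℚ) * (Nat.card {f : G →g H // Cond G s.2 H f}) by
          exact_mod_cast congrArg (Nat.cast (R := ℚ)) (key G s.2 H)]
    exact mul_div_cancel_left₀ _ haut.ne'
  rw [Finset.sum_congr rfl main, hcard]
  push_cast
  rfl
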